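/- Let T be a measurable kernel on (0,∞) × ℝ^d × ℝ^d satisfying: (i) 0 ≤ T_t(x,y) ≤ H_t(x,y) for all t > 0, x,y ∈ ℝ^d, where H_t is the classical heat kernel; (ii) the semigroup (Chapman–Kolmogorov) identity T_{t+s}(x,y) = ∫_{ℝ^d} T_t(x,u) T_s(u,y) du for all s,t > 0 and x,y ∈ ℝ^d. Let Q ⊆ ℝ^d be a cuboid whose half-sides satisfy r_i ≤ C₁ r_j, and suppose there exist ρ > 1 and C₀ > 0 such that sup_{y ∈ Q^*} ∫_{ℝ^d} T_{2^n d_Q²}(x,y) dx ≤ C₀ ρ^{−n} for all n ∈ ℕ. Then for every γ < log₂ ρ and every δ ∈ [0, γ) (with γ > 0) there is a constant C, depending only on d, ρ, C₀, C₁, κ, γ (and uniform in δ ∈ [0,γ)), such that sup_{y ∈ Q^*} ∫_{ℝ^d ∖ Q^{**}} sup_{t>0} t^δ T_t(x,y) dx ≤ C d_Q^{2δ}. -/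

import Mathlib

open MeasureTheory Set Metric Filter
open scoped ENNReal NNReal

noncomputable section

/-- `ℝ^d` with the Euclidean structure and the Lebesgue measure. -/
abbrev Rd (d : ℕ) := EuclideanSpace ℝ (Fin d)

/-- The cuboid `Q(z, r₁, …, r_d)`, always taken as a subset of `X`. -/
def cuboid {d : ℕ} (X : Set (Rd d)) (z : Rd d) (r : Fin d → ℝ) : Set (Rd d) :=
  {x ∈ X | ∀ i, |x i - z i| ≤ r i}

/-- The `k`-fold enlargement `Q^{*⋯*}` of the cuboid, with enlargement parameter `κ`
(`k = 1` is `Q^*`, `k = 2` is `Q^{**}`, `k = 3` is `Q^{***}`). -/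
def cuboidSt {d : ℕ} (X : Set (Rd d)) (z : Rd d) (r : Fin d → ℝ) (κ : ℝ) (k : ℕ) :
    Set (Rd d) :=
  cuboid X z fun i => κ ^ k * r i

/-- The classical heat kernel `H_t(x,y) = (4πt)^{-d/2} exp(-|x-y|²/(4t))` on `ℝ^d`. -/
def heatK (d : ℕ) (t : ℝ) (x y : Rd d) : ℝ :=
  (4 * Real.pi * t) ^ (-(d : ℝ) / 2) * Real.exp (-dist x y ^ 2 / (4 * t))

lemma integrable_gauss {d : ℕ} {b : ℝ} (hb : 0 < b) :
    Integrable (fun v : Rd d => Real.exp (-b * ‖v‖^2)) := by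
  have h := (GaussianFourier.integrable_cexp_neg_mul_sq_norm_add
    (b := (b:ℂ)) (by simpa using hb) 0 (0 : Rd d)).re
  refine h.congr (Eventually.of_forall fun v => ?_)
  simp [Complex.exp_ofReal_re, ← Complex.ofReal_pow]
  norm_cast

lemma heat_mass (d : ℕ) {τ : ℝ} (hτ : 0 < τ) (u : Rd d) :
    ∫⁻ x, ENNReal.ofReal (heatK d τ x u) = 1 := by
  have hb : 0 < 1 / (4 * τ) := by positivity
  have hint : Integrable (fun x : Rd d => Real.exp (-(1/(4*τ)) * ‖x - u‖^2)) :=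
    (integrable_gauss hb).comp_sub_right u
  have heq : ∀ x : Rd d, heatK d τ x u
      = (4 * Real.pi * τ) ^ (-(d : ℝ) / 2) * Real.exp (-(1/(4*τ)) * ‖x - u‖^2) := by
    intro x
    rw [heatK, dist_eq_norm]
    congr 1
    congr 1
    field_simp
  simp_rw [heq]
  rw [← ofReal_integral_eq_lintegral_ofReal]
  · rw [integral_const_mul, integral_sub_right_eq_self (fun x : Rd d => Real.exp (-(1/(4*τ)) * ‖x‖^2)) u,
      GaussianFourier.integral_rexp_neg_mul_sq_norm hb]
    have : Real.pi / (1 / (4 * τ)) = 4 * Real.pi * τ := by field_simp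
    rw [this, finrank_euclideanSpace_fin]
    rw [← Real.rpow_add (by positivity)]
    rw [neg_div, neg_add_cancel, Real.rpow_zero]
    exact ENNReal.ofReal_one
  · exact (hint.const_mul _)
  · exact Eventually.of_forall fun x => by positivity

lemma ofReal_integral_le {α : Type*} [MeasurableSpace α] (μ : Measure α) (f : α → ℝ)
    (hf : ∀ x, 0 ≤ f x) :
    ENNReal.ofReal (∫ x, f x ∂μ) ≤ ∫⁻ x, ENNReal.ofReal (f x) ∂μ := by
  by_cases hi : Integrable f μ
  · rw [ofReal_integral_eq_lintegral_ofReal hi (Eventually.of_forall hf)]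
  · rw [integral_undef hi]; simp

-- helper: v^(d/2) ≤ (1+(8d)^d) * exp(v/8) for v ≥ 0
lemma rpow_le_exp (d : ℕ) (hd : 1 ≤ d) {v : ℝ} (hv : 0 ≤ v) :
    v ^ ((d : ℝ) / 2) ≤ (1 + (8 * d) ^ d) * Real.exp (v / 8) := by
  have hM : (1 : ℝ) ≤ 1 + (8 * d) ^ d := le_add_of_nonneg_right (by positivity)
  have hexp1 : (1 : ℝ) ≤ Real.exp (v / 8) := Real.one_le_exp (by positivity)
  rcases le_total v 1 with h | h
  · calc v ^ ((d : ℝ) / 2) ≤ 1 := Real.rpow_le_one hv h (by positivity)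
      _ ≤ (1 + (8 * d) ^ d) * Real.exp (v / 8) := by nlinarith
  · have hvd : v ^ ((d : ℝ) / 2) ≤ v ^ (d : ℕ) := by
      rw [← Real.rpow_natCast v d]
      exact Real.rpow_le_rpow_of_exponent_le h (by
        rw [div_le_iff₀ (by norm_num : (0:ℝ) < 2)]
        have : (1 : ℝ) ≤ d := by exact_mod_cast hd
        nlinarith)
    have key : (v / (8 * d)) ^ (d : ℕ) ≤ Real.exp (v / 8) := by
      have h1 : v / (8 * d) ≤ Real.exp (v / (8 * d)) :=
        le_trans (by linarith [Real.add_one_le_exp (v / (8*d))]) le_rfl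
      have h2 : (v / (8 * d)) ^ (d:ℕ) ≤ Real.exp (v / (8 * d)) ^ (d:ℕ) :=
        pow_le_pow_left₀ (by positivity) h1 d
      rwa [← Real.exp_nat_mul, show (d:ℝ) * (v / (8 * d)) = v / 8 by
        field_simp] at h2
    have : v ^ (d:ℕ) ≤ (8 * d) ^ d * Real.exp (v / 8) := by
      have := mul_le_mul_of_nonneg_left key (by positivity : (0:ℝ) ≤ ((8:ℝ) * d) ^ (d:ℕ))
      calc v ^ (d:ℕ) = ((8:ℝ) * d) ^ (d:ℕ) * (v / (8 * d)) ^ (d:ℕ) := by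
            rw [← mul_pow]
            congr 1
            field_simp
        _ ≤ _ := this
    calc v ^ ((d : ℝ) / 2) ≤ v ^ (d:ℕ) := hvd
      _ ≤ (8 * d) ^ d * Real.exp (v / 8) := this
      _ ≤ (1 + (8 * d) ^ d) * Real.exp (v / 8) := by nlinarith

lemma small_ptwise (d : ℕ) {γ δ c0 dQ t : ℝ} (hδ0 : 0 ≤ δ) (hδγ : δ ≤ γ)
    (hc0 : 0 < c0) (hdQ : 0 < dQ) (ht : 0 < t) (ht2 : t ≤ 2 * dQ ^ 2)
    {x y : Rd d} (hR : c0 * dQ ≤ dist x y) :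
    t ^ δ * heatK d t x y ≤
      ((2:ℝ) ^ γ * (1 + (8 * d) ^ d) * c0 ^ (-(d:ℝ)) * 2 ^ d) * dQ ^ (2 * δ) *
        heatK d (4 * dQ ^ 2) x y := by
  rcases Nat.eq_zero_or_pos d with hd0 | hd
  · -- d = 0 : heatK has exponent 0, everything is 1 * exp
    subst hd0
    simp only [heatK, Nat.cast_zero, neg_zero, zero_div, Real.rpow_zero, one_mul, pow_zero,
      mul_one]
    have h1 : t ^ δ ≤ (2:ℝ)^γ * dQ ^ (2*δ) := by
      calc t ^ δ ≤ (2 * dQ ^ 2) ^ δ := Real.rpow_le_rpow ht.le ht2 hδ0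
        _ = 2 ^ δ * dQ ^ (2*δ) := by
            rw [Real.mul_rpow (by norm_num) (by positivity), ← Real.rpow_natCast dQ 2,
              ← Real.rpow_mul hdQ.le]
            norm_num
        _ ≤ 2 ^ γ * dQ ^ (2*δ) :=
            mul_le_mul_of_nonneg_right
              (Real.rpow_le_rpow_of_exponent_le one_le_two hδγ) (by positivity)
    have h2 : Real.exp (-dist x y ^ 2 / (4 * t)) ≤ Real.exp (-dist x y ^ 2 / (4 * (4 * dQ ^ 2))) := by
      apply Real.exp_le_exp.2
      rw [div_le_div_iff₀ (by positivity) (by positivity)]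
      nlinarith [sq_nonneg (dist x y)]
    calc t ^ δ * Real.exp (-dist x y ^ 2 / (4 * t))
        ≤ ((2:ℝ)^γ * dQ ^ (2*δ)) * Real.exp (-dist x y ^ 2 / (4 * (4 * dQ ^ 2))) := by
          apply mul_le_mul h1 h2 (Real.exp_nonneg _) (by positivity)
      _ ≤ _ := by
          nlinarith [mul_nonneg (Real.rpow_nonneg hdQ.le (2*δ))
              (Real.exp_nonneg (-dist x y ^ 2 / (4 * (4 * dQ ^ 2)))),
            Real.rpow_nonneg (by norm_num : (0:ℝ) ≤ 2) γ]
  · have hRpos : 0 < dist x y := lt_of_lt_of_le (by positivity) hR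
    set R := dist x y with hRdef
    have hπ : (0:ℝ) < Real.pi := Real.pi_pos
    set M : ℝ := 1 + (8 * d) ^ d with hM
    have hMpos : (0:ℝ) < M := by positivity
    -- expand LHS
    have expL : t ^ δ * heatK d t x y
        = t ^ δ * ((4 * Real.pi) ^ (-(d:ℝ)/2)) *
          (t ^ (-(d:ℝ)/2) * Real.exp (-R ^ 2 / (8 * t))) * Real.exp (-R ^ 2 / (8 * t)) := by
      rw [heatK, ← hRdef, show (4 * Real.pi * t) = (4 * Real.pi) * t from rfl,
        Real.mul_rpow (by positivity) ht.le,
        show -R ^ 2 / (4 * t) = -R ^ 2 / (8 * t) + -R ^ 2 / (8 * t) by field_simp; ring,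
        Real.exp_add]
      ring
    -- expand RHS
    have expR : ((2:ℝ) ^ γ * M * c0 ^ (-(d:ℝ)) * 2 ^ d) * dQ ^ (2 * δ) *
          heatK d (4 * dQ ^ 2) x y
        = ((2:ℝ)^γ * dQ ^ (2*δ)) * ((4 * Real.pi) ^ (-(d:ℝ)/2)) *
          (M * (c0 ^ (-(d:ℝ)) * dQ ^ (-(d:ℝ)))) * Real.exp (-R ^ 2 / (16 * dQ ^ 2)) := by
      rw [heatK, ← hRdef]
      have h4 : (4 * Real.pi * (4 * dQ ^ 2)) = (4 * Real.pi) * (2 * dQ) ^ 2 := by ring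
      rw [h4, Real.mul_rpow (by positivity) (by positivity),
        ← Real.rpow_natCast (2 * dQ) 2, ← Real.rpow_mul (by positivity),
        show ((2:ℕ):ℝ) * (-(d:ℝ)/2) = -(d:ℝ) by push_cast; ring,
        Real.mul_rpow (by norm_num) hdQ.le,
        show (4:ℝ) * (4 * dQ ^ 2) = 16 * dQ ^ 2 by ring]
      have h2d : ((2:ℝ) ^ (d:ℕ)) * (2:ℝ) ^ (-(d:ℝ)) = 1 := by
        rw [← Real.rpow_natCast (2:ℝ) d, ← Real.rpow_add (by norm_num)]
        simp
      linear_combination (2 ^ γ * dQ ^ (2*δ) * (4*Real.pi) ^ (-(d:ℝ)/2) * M *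
        c0 ^ (-(d:ℝ)) * dQ ^ (-(d:ℝ)) * Real.exp (-R ^ 2 / (16 * dQ ^ 2))) * h2d
    have F1 : t ^ δ ≤ (2:ℝ)^γ * dQ ^ (2*δ) := by
      calc t ^ δ ≤ (2 * dQ ^ 2) ^ δ := Real.rpow_le_rpow ht.le ht2 hδ0
        _ = 2 ^ δ * dQ ^ (2*δ) := by
            rw [Real.mul_rpow (by norm_num) (by positivity), ← Real.rpow_natCast dQ 2,
              ← Real.rpow_mul hdQ.le]
            norm_num
        _ ≤ 2 ^ γ * dQ ^ (2*δ) :=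
            mul_le_mul_of_nonneg_right
              (Real.rpow_le_rpow_of_exponent_le one_le_two hδγ) (by positivity)
    have hv : 0 < R ^ 2 / t := by positivity
    set v := R ^ 2 / t with hvdef
    have he : Real.exp (-R ^ 2 / (8 * t)) = Real.exp (-(v/8)) := by
      congr 1; rw [hvdef]; field_simp
    have hRtv : (R ^ 2 : ℝ) = t * v := by rw [hvdef]; field_simp
    have hsplit : (R^2 : ℝ) ^ (-(d:ℝ)/2) = t ^ (-(d:ℝ)/2) * v ^ (-(d:ℝ)/2) := by
      rw [hRtv, Real.mul_rpow ht.le hv.le]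
    have hvv : v ^ (-(d:ℝ)/2) * v ^ ((d:ℝ)/2) = 1 := by
      rw [← Real.rpow_add hv, show -(d:ℝ)/2 + (d:ℝ)/2 = 0 by ring, Real.rpow_zero]
    have htv : t ^ (-(d:ℝ)/2) = (R^2) ^ (-(d:ℝ)/2) * v ^ ((d:ℝ)/2) := by
      calc t ^ (-(d:ℝ)/2) = t ^ (-(d:ℝ)/2) * (v ^ (-(d:ℝ)/2) * v ^ ((d:ℝ)/2)) := by
            rw [hvv, mul_one]
        _ = (R^2) ^ (-(d:ℝ)/2) * v ^ ((d:ℝ)/2) := by rw [← mul_assoc, ← hsplit]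
    have hvM : v ^ ((d:ℝ)/2) * Real.exp (-(v/8)) ≤ M := by
      rw [Real.exp_neg, mul_inv_le_iff₀ (Real.exp_pos _)]
      exact rpow_le_exp d hd hv.le
    have hRd : (R^2 : ℝ) ^ (-(d:ℝ)/2) ≤ c0 ^ (-(d:ℝ)) * dQ ^ (-(d:ℝ)) := by
      have e1 : (R^2 : ℝ) ^ (-(d:ℝ)/2) = R ^ (-(d:ℝ)) := by
        rw [← Real.rpow_natCast R 2, ← Real.rpow_mul hRpos.le,
          show ((2:ℕ):ℝ) * (-(d:ℝ)/2) = -(d:ℝ) by push_cast; ring]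
      rw [e1, ← Real.mul_rpow hc0.le hdQ.le]
      exact Real.rpow_le_rpow_of_nonpos (by positivity) hR
        (neg_nonpos.2 (Nat.cast_nonneg d))
    have F2 : t ^ (-(d:ℝ)/2) * Real.exp (-R ^ 2 / (8 * t))
        ≤ M * (c0 ^ (-(d:ℝ)) * dQ ^ (-(d:ℝ))) := by
      calc t ^ (-(d:ℝ)/2) * Real.exp (-R ^ 2 / (8 * t))
          = (R^2) ^ (-(d:ℝ)/2) * (v ^ ((d:ℝ)/2) * Real.exp (-(v/8))) := by
            rw [htv, he]; ring
        _ ≤ (c0 ^ (-(d:ℝ)) * dQ ^ (-(d:ℝ))) * M :=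
            mul_le_mul hRd hvM (by positivity) (by positivity)
        _ = M * (c0 ^ (-(d:ℝ)) * dQ ^ (-(d:ℝ))) := by ring
    have F3 : Real.exp (-R ^ 2 / (8 * t)) ≤ Real.exp (-R ^ 2 / (16 * dQ ^ 2)) := by
      apply Real.exp_le_exp.2
      rw [div_le_div_iff₀ (by positivity) (by positivity)]
      nlinarith [sq_nonneg R]
    rw [expL, expR]
    exact mul_le_mul
      (mul_le_mul (mul_le_mul_of_nonneg_right F1 (by positivity)) F2 (by positivity)
        (by positivity)) F3 (Real.exp_nonneg _) (by positivity)

lemma heat_comp (d : ℕ) {a b τ : ℝ} (ha : 0 < a) (h1 : a ≤ τ) (h2 : τ ≤ b) (x u : Rd d) :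
    heatK d τ x u ≤ (b / a) ^ ((d:ℝ)/2) * heatK d b x u := by
  have hτ : 0 < τ := lt_of_lt_of_le ha h1
  have hb : 0 < b := lt_of_lt_of_le hτ h2
  have hπ := Real.pi_pos
  have key : (4*Real.pi*τ) ^ (-(d:ℝ)/2) ≤ (b/a) ^ ((d:ℝ)/2) * (4*Real.pi*b) ^ (-(d:ℝ)/2) := by
    rw [show -(d:ℝ)/2 = -((d:ℝ)/2) by ring, Real.rpow_neg (by positivity),
      ← Real.inv_rpow (by positivity), Real.rpow_neg (by positivity),
      ← Real.inv_rpow (by positivity),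
      ← Real.mul_rpow (by positivity) (by positivity)]
    apply Real.rpow_le_rpow (by positivity) ?_ (by positivity)
    rw [show b/a * (4*Real.pi*b)⁻¹ = (4*Real.pi*a)⁻¹ by field_simp]
    apply inv_anti₀ (by positivity) (by nlinarith)
  have kexp : Real.exp (-dist x u ^ 2 / (4*τ)) ≤ Real.exp (-dist x u ^ 2 / (4*b)) := by
    apply Real.exp_le_exp.2
    rw [div_le_div_iff₀ (by positivity) (by positivity)]
    nlinarith [sq_nonneg (dist x u)]
  calc heatK d τ x u ≤ ((b/a) ^ ((d:ℝ)/2) * (4*Real.pi*b) ^ (-(d:ℝ)/2)) *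
        Real.exp (-dist x u ^ 2 / (4*b)) :=
      mul_le_mul key kexp (Real.exp_nonneg _) (by positivity)
    _ = (b / a) ^ ((d:ℝ)/2) * heatK d b x u := by rw [heatK]; ring

lemma coord_le {d : ℕ} (x y : Rd d) (i : Fin d) : |x i - y i| ≤ dist x y := by
  rw [EuclideanSpace.dist_eq]
  have h1 : |x i - y i| = dist (x i) (y i) := (Real.dist_eq _ _).symm
  rw [h1, ← Real.sqrt_sq dist_nonneg]
  exact Real.sqrt_le_sqrt
    (Finset.single_le_sum (f := fun j => dist (x j) (y j) ^ 2)
      (fun j _ => sq_nonneg _) (Finset.mem_univ i))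

lemma cuboid_dist_le {d : ℕ} {C₁ : ℝ} {z : Rd d} {r : Fin d → ℝ}
    (hr : ∀ i, 0 < r i) (hcomp : ∀ i j, r i ≤ C₁ * r j) (j : Fin d)
    {x x' : Rd d} (hx : x ∈ cuboid univ z r) (hx' : x' ∈ cuboid univ z r) :
    dist x x' ≤ Real.sqrt d * (2 * (C₁ * r j)) := by
  have hb : 0 ≤ 2 * (C₁ * r j) := by nlinarith [hr j, hcomp j j]
  rw [EuclideanSpace.dist_eq]
  calc Real.sqrt (∑ i, dist (x i) (x' i) ^ 2)
      ≤ Real.sqrt (∑ _i : Fin d, (2 * (C₁ * r j)) ^ 2) := by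
        apply Real.sqrt_le_sqrt
        apply Finset.sum_le_sum
        intro i _
        have h1 : dist (x i) (x' i) ≤ 2 * (C₁ * r j) := by
          rw [Real.dist_eq]
          have e1 := hx.2 i
          have e2 := hx'.2 i
          have e3 := hcomp i j
          calc |x i - x' i| ≤ |x i - z i| + |z i - x' i| := abs_sub_le _ _ _
            _ = |x i - z i| + |x' i - z i| := by rw [abs_sub_comm (z i)]
            _ ≤ r i + r i := add_le_add e1 e2
            _ ≤ 2 * (C₁ * r j) := by linarith
        exact pow_le_pow_left₀ dist_nonneg h1 2
    _ = Real.sqrt ((d : ℝ) * (2 * (C₁ * r j)) ^ 2) := by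
        rw [Finset.sum_const, Finset.card_univ, Fintype.card_fin, nsmul_eq_mul]
    _ = Real.sqrt d * (2 * (C₁ * r j)) := by
        rw [Real.sqrt_mul (Nat.cast_nonneg d), Real.sqrt_sq hb]

lemma diam_cuboid_le {d : ℕ} {C₁ : ℝ} {z : Rd d} {r : Fin d → ℝ}
    (hr : ∀ i, 0 < r i) (hcomp : ∀ i j, r i ≤ C₁ * r j) (j : Fin d) :
    diam (cuboid univ z r) ≤ Real.sqrt d * (2 * (C₁ * r j)) :=
  diam_le_of_forall_dist_le (by nlinarith [hr j, hcomp j j, Real.sqrt_nonneg (d:ℝ)])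
    (fun _ hx _ hx' => cuboid_dist_le hr hcomp j hx hx')

lemma cuboid_bounded {d : ℕ} {C₁ : ℝ} {z : Rd d} {r : Fin d → ℝ}
    (hr : ∀ i, 0 < r i) (hcomp : ∀ i j, r i ≤ C₁ * r j) (hd : 0 < d) :
    Bornology.IsBounded (cuboid univ z r) := by
  rw [Metric.isBounded_iff]
  exact ⟨Real.sqrt d * (2 * (C₁ * r ⟨0, hd⟩)),
    fun _ hx _ hx' => cuboid_dist_le hr hcomp _ hx hx'⟩

lemma diam_cuboid_pos {d : ℕ} {C₁ : ℝ} {z : Rd d} {r : Fin d → ℝ}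
    (hr : ∀ i, 0 < r i) (hcomp : ∀ i j, r i ≤ C₁ * r j) (hd : 0 < d) :
    0 < diam (cuboid univ z r) := by
  set i0 : Fin d := ⟨0, hd⟩
  set a : Rd d := (WithLp.equiv 2 (Fin d → ℝ)).symm (fun i => z i + r i) with ha
  have hai : ∀ i, a i = z i + r i := fun i => rfl
  have haQ : a ∈ cuboid univ z r := by
    refine ⟨mem_univ _, fun i => ?_⟩
    rw [hai i]
    simp [abs_of_nonneg (hr i).le]
  have hzQ : z ∈ cuboid univ z r := by
    refine ⟨mem_univ _, fun i => ?_⟩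
    simp [(hr i).le]
  have h1 : r i0 ≤ dist a z := by
    have := coord_le a z i0
    rw [hai i0] at this
    calc r i0 = |z i0 + r i0 - z i0| := by rw [abs_of_nonneg (by linarith [hr i0])]; ring
      _ ≤ dist a z := this
  exact lt_of_lt_of_le (hr i0)
    (le_trans h1 (dist_le_diam_of_mem (cuboid_bounded hr hcomp hd) haQ hzQ))

lemma sep {d : ℕ} {C₁ κ : ℝ} (hC₁ : 0 < C₁) (hκ : 1 < κ) {z : Rd d} {r : Fin d → ℝ}
    (hr : ∀ i, 0 < r i) (hcomp : ∀ i j, r i ≤ C₁ * r j) (hd : 0 < d)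
    {y x : Rd d} (hy : y ∈ cuboidSt univ z r κ 1) (hx : x ∉ cuboidSt univ z r κ 2) :
    (κ * (κ - 1) / (Real.sqrt d * (2 * C₁))) * diam (cuboid univ z r) ≤ dist x y := by
  have hsd : 0 < Real.sqrt d := Real.sqrt_pos.2 (by exact_mod_cast hd)
  have hκ0 : 0 < κ := by linarith
  simp only [cuboidSt, cuboid, mem_setOf_eq, mem_univ, true_and, not_forall, not_le] at hx
  obtain ⟨i, hi⟩ := hx
  have hyi : |y i - z i| ≤ κ * r i := by
    have := hy.2 i
    simpa [pow_one] using this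
  have hxy : κ * (κ - 1) * r i ≤ |x i - y i| := by
    have h2 : |x i - z i| ≤ |x i - y i| + |y i - z i| := abs_sub_le _ _ _
    have h3 : (κ:ℝ) ^ 2 * r i = κ * κ * r i := by ring
    nlinarith [hr i]
  have hc0 : 0 ≤ κ * (κ - 1) / (Real.sqrt d * (2 * C₁)) :=
    div_nonneg (by nlinarith) (by positivity)
  calc (κ * (κ - 1) / (Real.sqrt d * (2 * C₁))) * diam (cuboid univ z r)
      ≤ (κ * (κ - 1) / (Real.sqrt d * (2 * C₁))) * (Real.sqrt d * (2 * (C₁ * r i))) :=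
        mul_le_mul_of_nonneg_left (diam_cuboid_le hr hcomp i) hc0
    _ = κ * (κ - 1) * r i := by field_simp
    _ ≤ |x i - y i| := hxy
    _ ≤ dist x y := coord_le x y i

/-- (A₁)-type estimate for Schrödinger semigroups: if `0 ≤ T_t ≤ H_t`,
`T` satisfies the Chapman–Kolmogorov identity, and `Q ⊆ ℝ^d` is a cuboid with comparable
half-sides satisfying the decay condition (D′) (`∫ T_{2ⁿ d_Q²}(·,y) ≤ C₀ ρ^{−n}` for
`y ∈ Q^*`), then for `0 < γ < log₂ ρ` there is `C` with
`sup_{y∈Q^*} ∫_{ℝ^d∖Q^{**}} sup_{t>0} t^δ T_t(x,y) dx ≤ C d_Q^{2δ}` for all `δ ∈ [0,γ)`. -/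
theorem stmt13 (d : ℕ) (ρ C₀ C₁ κ γ : ℝ) (hρ : 1 < ρ) (hC₀ : 0 < C₀) (hC₁ : 0 < C₁)
    (hκ : 1 < κ) (hγpos : 0 < γ) (hγ : γ < Real.logb 2 ρ) :
    ∃ C > 0,
      ∀ T : ℝ → Rd d → Rd d → ℝ,
        (Measurable fun p : ℝ × Rd d × Rd d => T p.1 p.2.1 p.2.2) →
        -- (i) 0 ≤ T_t ≤ H_t
        (∀ t > 0, ∀ x y : Rd d, 0 ≤ T t x y ∧ T t x y ≤ heatK d t x y) →
        -- (ii) Chapman–Kolmogorov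
        (∀ s > 0, ∀ t > 0, ∀ x y : Rd d,
          T (t + s) x y = ∫ u, T t x u * T s u y) →
      ∀ (z : Rd d) (r : Fin d → ℝ), (∀ i, 0 < r i) → (∀ i j, r i ≤ C₁ * r j) →
        -- the decay condition (D′)
        (∀ n : ℕ, ∀ y ∈ cuboidSt univ z r κ 1,
          (∫⁻ x, ENNReal.ofReal
              (T ((2 : ℝ) ^ n * diam (cuboid univ z r) ^ 2) x y))
            ≤ ENNReal.ofReal (C₀ * ρ ^ (-(n : ℝ)))) →
      ∀ δ : ℝ, 0 ≤ δ → δ < γ →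
      ∀ y ∈ cuboidSt univ z r κ 1,
        (∫⁻ x in univ \ cuboidSt univ z r κ 2,
            ⨆ (t : ℝ) (_ : 0 < t), ENNReal.ofReal (t ^ δ * T t x y))
          ≤ ENNReal.ofReal (C * diam (cuboid univ z r) ^ (2 * δ)) := by
  have hρ0 : (0:ℝ) < ρ := by linarith
  set c0 : ℝ := κ * (κ - 1) / (Real.sqrt d * (2 * C₁)) with hc0def
  have hc0nn : 0 ≤ c0 := div_nonneg (by nlinarith) (by positivity)
  have h2γρ : (2:ℝ) ^ γ < ρ := by
    have h := Real.rpow_lt_rpow_of_exponent_lt one_lt_two hγ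
    rwa [Real.rpow_logb (by norm_num) (by norm_num) hρ0] at h
  set ε : ℝ := 1 - 2 ^ γ / ρ with hεdef
  have hε : 0 < ε := by
    rw [hεdef, sub_pos, div_lt_one hρ0]; exact h2γρ
  set Asm : ℝ := (2:ℝ) ^ γ * (1 + (8 * d) ^ d) * c0 ^ (-(d:ℝ)) * 2 ^ d with hAsmdef
  have hAsm : 0 ≤ Asm := by
    apply mul_nonneg (mul_nonneg (mul_nonneg (by positivity) (by positivity)) ?_) (by positivity)
    exact Real.rpow_nonneg hc0nn _
  set Alg : ℝ := 2 ^ d * 4 ^ γ * C₀ * ε⁻¹ with hAlgdef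
  have hAlg : 0 ≤ Alg := by positivity
  refine ⟨Asm + Alg + 1, by positivity, ?_⟩
  intro T hmeas hT hCK z r hr hcomp hdecay δ hδ0 hδγ y hy
  rcases Nat.eq_zero_or_pos d with hd0 | hd
  · -- dimension zero: the integration region is empty
    have hempty : (univ \ cuboidSt univ z r κ 2 : Set (Rd d)) = ∅ := by
      subst hd0
      ext x
      simp only [mem_diff, mem_univ, true_and, mem_empty_iff_false, iff_false, not_not]
      exact ⟨mem_univ x, fun i => i.elim0⟩
    rw [hempty]
    simp only [Measure.restrict_empty, lintegral_zero_measure]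
    exact zero_le
  · -- main case
    set dQ : ℝ := diam (cuboid univ z r) with hdQdef
    have hdQ : 0 < dQ := diam_cuboid_pos hr hcomp hd
    have hc0pos : 0 < c0 := by
      rw [hc0def]
      apply div_pos (by nlinarith)
      have : (0:ℝ) < Real.sqrt d := Real.sqrt_pos.2 (by exact_mod_cast hd)
      positivity
    have hδγ' : δ ≤ γ := hδγ.le
    -- notation for the dyadic times
    set sn : ℕ → ℝ := fun n => (2:ℝ) ^ n * dQ ^ 2 with hsndef
    set bn : ℕ → ℝ := fun n => (2:ℝ) ^ (n+2) * dQ ^ 2 with hbndef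
    have hsnpos : ∀ n, 0 < sn n := fun n => by
      show (0:ℝ) < (2:ℝ) ^ n * dQ ^ 2; positivity
    have hbnpos : ∀ n, 0 < bn n := fun n => by
      show (0:ℝ) < (2:ℝ) ^ (n+2) * dQ ^ 2; positivity
    -- the dominating functions
    set SB : Rd d → ℝ≥0∞ := fun x =>
      ENNReal.ofReal (Asm * dQ ^ (2*δ) * heatK d (4 * dQ ^ 2) x y) with hSBdef
    set G : ℕ → Rd d → ℝ≥0∞ := fun n x =>
      ENNReal.ofReal ((bn n) ^ δ * 2 ^ d) *
        ∫⁻ u, ENNReal.ofReal (heatK d (bn n) x u) * ENNReal.ofReal (T (sn n) u y)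
      with hGdef
    -- measurability of pieces
    have hHcont : ∀ τ : ℝ, Continuous fun p : Rd d × Rd d => heatK d τ p.1 p.2 := by
      intro τ
      unfold heatK
      fun_prop
    have hHcont2 : ∀ τ : ℝ, Continuous fun x : Rd d => heatK d τ x y := by
      intro τ
      unfold heatK
      fun_prop
    have hTu : ∀ n : ℕ, Measurable fun u : Rd d => T (sn n) u y := by
      intro n
      exact hmeas.comp
        ((measurable_const.prodMk (measurable_id.prodMk measurable_const)))
    have hprod : ∀ n : ℕ, Measurable fun p : Rd d × Rd d =>
        ENNReal.ofReal (heatK d (bn n) p.1 p.2) * ENNReal.ofReal (T (sn n) p.2 y) := by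
      intro n
      exact ((ENNReal.measurable_ofReal.comp (hHcont (bn n)).measurable)).mul
        (ENNReal.measurable_ofReal.comp ((hTu n).comp measurable_snd))
    have hGmeas : ∀ n, Measurable (G n) := by
      intro n
      rw [hGdef]
      exact ((hprod n).lintegral_prod_right').const_mul _
    have hSBmeas : Measurable SB := by
      rw [hSBdef]
      exact ENNReal.measurable_ofReal.comp
        (continuous_const.mul (hHcont2 (4 * dQ ^ 2))).measurable
    -- Claim A: large-time pointwise bound
    have claimA : ∀ (n : ℕ) (x : Rd d) (t : ℝ),
        2 ^ (n+1) * dQ ^ 2 ≤ t → t ≤ bn n →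
        ENNReal.ofReal (t ^ δ * T t x y) ≤ G n x := by
      intro n x t ht1 ht2
      have htpos : 0 < t := lt_of_lt_of_le (by positivity) ht1
      have hs := hsnpos n
      have h2s : 2 * sn n = 2 ^ (n+1) * dQ ^ 2 := by
        show 2 * ((2:ℝ) ^ n * dQ ^ 2) = 2 ^ (n+1) * dQ ^ 2; ring
      have hts' : sn n ≤ t - sn n := by linarith
      have htspos : 0 < t - sn n := lt_of_lt_of_le hs hts'
      have htb : t - sn n ≤ bn n := by linarith [hbnpos n]
      have hCKt : T t x y = ∫ u, T (t - sn n) x u * T (sn n) u y := by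
        have h := hCK (sn n) hs (t - sn n) htspos x y
        rwa [sub_add_cancel] at h
      have h4 : bn n / sn n = 4 := by
        show ((2:ℝ) ^ (n+2) * dQ ^ 2) / ((2:ℝ) ^ n * dQ ^ 2) = 4
        rw [show (2:ℝ) ^ (n+2) = 2 ^ n * 4 by rw [pow_add]; norm_num]
        rw [mul_comm ((2:ℝ)^n) 4, mul_assoc]
        rw [mul_div_assoc]
        rw [div_self (by positivity : ((2:ℝ) ^ n * dQ ^ 2) ≠ 0), mul_one]
      have h4d : ((4:ℝ)) ^ ((d:ℝ)/2) = 2 ^ (d:ℕ) := by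
        rw [show (4:ℝ) = 2 ^ (2:ℕ) by norm_num, ← Real.rpow_natCast 2 2,
          ← Real.rpow_mul (by norm_num),
          show ((2:ℕ):ℝ) * ((d:ℝ)/2) = ((d:ℕ):ℝ) by push_cast; ring,
          Real.rpow_natCast]
      have hheat : ∀ u, T (t - sn n) x u ≤ 2 ^ (d:ℕ) * heatK d (bn n) x u := by
        intro u
        calc T (t - sn n) x u ≤ heatK d (t - sn n) x u := (hT _ htspos x u).2
          _ ≤ (bn n / sn n) ^ ((d:ℝ)/2) * heatK d (bn n) x u :=
              heat_comp d hs hts' htb x u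
          _ = 2 ^ (d:ℕ) * heatK d (bn n) x u := by rw [h4, h4d]
      calc ENNReal.ofReal (t ^ δ * T t x y)
          = ENNReal.ofReal (t ^ δ) * ENNReal.ofReal (T t x y) :=
            ENNReal.ofReal_mul (Real.rpow_nonneg htpos.le δ)
        _ ≤ ENNReal.ofReal ((bn n) ^ δ) *
              ∫⁻ u, ENNReal.ofReal (T (t - sn n) x u * T (sn n) u y) := by
            apply mul_le_mul'
            · exact ENNReal.ofReal_le_ofReal
                (Real.rpow_le_rpow htpos.le ht2 hδ0)
            · rw [hCKt]
              exact ofReal_integral_le _ _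
                (fun u => mul_nonneg (hT _ htspos x u).1 (hT _ hs u y).1)
        _ ≤ ENNReal.ofReal ((bn n) ^ δ) *
              ∫⁻ u, ENNReal.ofReal ((2:ℝ) ^ (d:ℕ)) *
                (ENNReal.ofReal (heatK d (bn n) x u) * ENNReal.ofReal (T (sn n) u y)) := by
            apply mul_le_mul' le_rfl
            apply lintegral_mono
            intro u
            simp only []
            rw [ENNReal.ofReal_mul (hT _ htspos x u).1]
            calc ENNReal.ofReal (T (t - sn n) x u) * ENNReal.ofReal (T (sn n) u y)
                ≤ ENNReal.ofReal ((2:ℝ) ^ (d:ℕ) * heatK d (bn n) x u) *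
                    ENNReal.ofReal (T (sn n) u y) :=
                  mul_le_mul' (ENNReal.ofReal_le_ofReal (hheat u)) le_rfl
              _ = ENNReal.ofReal ((2:ℝ) ^ (d:ℕ)) *
                    (ENNReal.ofReal (heatK d (bn n) x u) * ENNReal.ofReal (T (sn n) u y)) := by
                  rw [ENNReal.ofReal_mul (by positivity), mul_assoc]
        _ = G n x := by
            rw [hGdef]
            simp only []
            rw [lintegral_const_mul' _ _ ENNReal.ofReal_ne_top, ← mul_assoc,
              ← ENNReal.ofReal_mul (Real.rpow_nonneg (hbnpos n).le δ)]
    -- Claim Small : small-time pointwise bound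
    have claimSmall : ∀ x ∈ univ \ cuboidSt univ z r κ 2, ∀ t : ℝ,
        0 < t → t ≤ 2 * dQ ^ 2 →
        ENNReal.ofReal (t ^ δ * T t x y) ≤ SB x := by
      intro x hx t ht hle
      have hR : c0 * dQ ≤ dist x y := by
        rw [hc0def, hdQdef]
        exact sep hC₁ hκ hr hcomp hd hy hx.2
      apply ENNReal.ofReal_le_ofReal
      calc t ^ δ * T t x y ≤ t ^ δ * heatK d t x y :=
            mul_le_mul_of_nonneg_left (hT t ht x y).2 (Real.rpow_nonneg ht.le δ)
        _ ≤ Asm * dQ ^ (2 * δ) * heatK d (4 * dQ ^ 2) x y := by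
            rw [hAsmdef]
            exact small_ptwise d hδ0 hδγ' hc0pos hdQ ht hle hR
    -- pointwise domination of the supremum
    have pointwise : ∀ x ∈ univ \ cuboidSt univ z r κ 2,
        (⨆ (t : ℝ) (_ : 0 < t), ENNReal.ofReal (t ^ δ * T t x y))
          ≤ SB x + ∑' n, G n x := by
      intro x hx
      apply iSup_le
      intro t
      apply iSup_le
      intro ht
      rcases le_or_gt t (2 * dQ ^ 2) with hle | hgt
      · exact le_trans (claimSmall x hx t ht hle) le_self_add
      · set a : ℝ := t / (2 * dQ ^ 2) with hadef
        have h2dQ : (0:ℝ) < 2 * dQ ^ 2 := by positivity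
        have ha : 1 < a := (one_lt_div h2dQ).2 hgt
        have hlb : 0 ≤ Real.logb 2 a := Real.logb_nonneg one_lt_two ha.le
        set n : ℕ := Nat.floor (Real.logb 2 a) with hndef
        have h1 : (2:ℝ) ^ n ≤ a := by
          calc (2:ℝ) ^ n = 2 ^ ((n:ℝ)) := (Real.rpow_natCast 2 n).symm
            _ ≤ 2 ^ Real.logb 2 a :=
                Real.rpow_le_rpow_of_exponent_le one_le_two (Nat.floor_le hlb)
            _ = a := Real.rpow_logb (by norm_num) (by norm_num) (by linarith)
        have h2 : a ≤ (2:ℝ) ^ (n+1) := by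
          have hfl := (Nat.lt_floor_add_one (Real.logb 2 a)).le
          calc a = 2 ^ Real.logb 2 a :=
                (Real.rpow_logb (by norm_num) (by norm_num) (by linarith)).symm
            _ ≤ 2 ^ (((n:ℕ):ℝ) + 1) :=
                Real.rpow_le_rpow_of_exponent_le one_le_two (by exact_mod_cast hfl)
            _ = 2 ^ (n+1) := by
                rw [← Real.rpow_natCast 2 (n+1)]
                norm_num
        have ht1 : 2 ^ (n+1) * dQ ^ 2 ≤ t := by
          have := (le_div_iff₀ h2dQ).1 h1
          calc (2:ℝ) ^ (n+1) * dQ ^ 2 = 2 ^ n * (2 * dQ ^ 2) := by ring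
            _ ≤ t := this
        have ht2 : t ≤ bn n := by
          have := (div_le_iff₀ h2dQ).1 h2
          calc t ≤ 2 ^ (n+1) * (2 * dQ ^ 2) := this
            _ = bn n := by show _ = (2:ℝ) ^ (n+2) * dQ ^ 2; ring
        exact le_trans (claimA n x t ht1 ht2)
          (le_trans (ENNReal.le_tsum n) le_add_self)
    -- integral of the small part
    have intSB : ∫⁻ x, SB x ≤ ENNReal.ofReal (Asm * dQ ^ (2*δ)) := by
      rw [hSBdef]
      simp only []
      have h1 : ∀ x : Rd d, ENNReal.ofReal (Asm * dQ ^ (2*δ) * heatK d (4 * dQ ^ 2) x y)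
          = ENNReal.ofReal (Asm * dQ ^ (2*δ)) * ENNReal.ofReal (heatK d (4 * dQ ^ 2) x y) :=
        fun x => ENNReal.ofReal_mul (by positivity)
      simp_rw [h1]
      rw [lintegral_const_mul' _ _ ENNReal.ofReal_ne_top,
        heat_mass d (by positivity) y, mul_one]
    -- integral of each large piece
    have intG : ∀ n : ℕ, ∫⁻ x, G n x ≤
        ENNReal.ofReal (2 ^ d * 4 ^ γ * C₀ * dQ ^ (2*δ)) *
          (ENNReal.ofReal (2 ^ γ / ρ)) ^ n := by
      intro n
      have hswap : (∫⁻ x, ∫⁻ u, ENNReal.ofReal (heatK d (bn n) x u) *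
            ENNReal.ofReal (T (sn n) u y))
          = ∫⁻ u, ∫⁻ x, ENNReal.ofReal (heatK d (bn n) x u) *
            ENNReal.ofReal (T (sn n) u y) := by
        exact lintegral_lintegral_swap (hprod n).aemeasurable
      have hinner : ∀ u : Rd d, (∫⁻ x, ENNReal.ofReal (heatK d (bn n) x u) *
            ENNReal.ofReal (T (sn n) u y)) = ENNReal.ofReal (T (sn n) u y) := by
        intro u
        rw [lintegral_mul_const' _ _ ENNReal.ofReal_ne_top,
          heat_mass d (hbnpos n) u, one_mul]
      have hdec : (∫⁻ u, ENNReal.ofReal (T (sn n) u y))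
          ≤ ENNReal.ofReal (C₀ * ρ ^ (-(n:ℝ))) := hdecay n y hy
      have hscal : (bn n) ^ δ * 2 ^ d * (C₀ * ρ ^ (-(n:ℝ)))
          ≤ 2 ^ d * 4 ^ γ * C₀ * dQ ^ (2*δ) * (2 ^ γ / ρ) ^ n := by
        have e1 : (bn n) ^ δ = ((2:ℝ) ^ (n+2)) ^ δ * dQ ^ (2*δ) := by
          show ((2:ℝ) ^ (n+2) * dQ ^ 2) ^ δ = _
          rw [Real.mul_rpow (by positivity) (by positivity),
            ← Real.rpow_natCast dQ 2, ← Real.rpow_mul hdQ.le]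
          norm_num
        have e2 : ((2:ℝ) ^ (n+2)) ^ δ ≤ ((2:ℝ) ^ (n+2)) ^ γ :=
          Real.rpow_le_rpow_of_exponent_le (one_le_pow₀ one_le_two) hδγ'
        have e3 : ((2:ℝ) ^ (n+2)) ^ γ = 4 ^ γ * ((2:ℝ) ^ γ) ^ n := by
          rw [← Real.rpow_natCast 2 (n+2), ← Real.rpow_natCast ((2:ℝ)^γ) n,
            ← Real.rpow_mul (by norm_num), ← Real.rpow_mul (by norm_num),
            show (4:ℝ) = 2 ^ (2:ℕ) by norm_num, ← Real.rpow_natCast 2 2,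
            ← Real.rpow_mul (by norm_num), ← Real.rpow_add (by norm_num)]
          push_cast
          ring_nf
        have e4 : ρ ^ (-(n:ℝ)) = (ρ⁻¹) ^ n := by
          rw [Real.rpow_neg hρ0.le, Real.rpow_natCast]; exact (inv_pow ρ n).symm
        have e5 : ((2:ℝ) ^ γ) ^ n * (ρ⁻¹) ^ n = (2 ^ γ / ρ) ^ n := by
          rw [← mul_pow, div_eq_mul_inv]
        have hpow_nonneg : (0:ℝ) ≤ ((2:ℝ) ^ γ) ^ n := by positivity
        calc (bn n) ^ δ * 2 ^ d * (C₀ * ρ ^ (-(n:ℝ)))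
            = ((2:ℝ) ^ (n+2)) ^ δ * (dQ ^ (2*δ) * 2 ^ d * C₀ * (ρ⁻¹) ^ n) := by
              rw [e1, e4]; try ring
          _ ≤ ((2:ℝ) ^ (n+2)) ^ γ * (dQ ^ (2*δ) * 2 ^ d * C₀ * (ρ⁻¹) ^ n) := by
              apply mul_le_mul_of_nonneg_right e2
              positivity
          _ = 2 ^ d * 4 ^ γ * C₀ * dQ ^ (2*δ) * (2 ^ γ / ρ) ^ n := by
              rw [e3, ← e5]; ring
      calc ∫⁻ x, G n x
          = ENNReal.ofReal ((bn n) ^ δ * 2 ^ d) *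
              ∫⁻ u, ENNReal.ofReal (T (sn n) u y) := by
            rw [hGdef]
            simp only []
            rw [lintegral_const_mul' _ _ ENNReal.ofReal_ne_top, hswap]
            congr 1
            exact lintegral_congr hinner
        _ ≤ ENNReal.ofReal ((bn n) ^ δ * 2 ^ d) * ENNReal.ofReal (C₀ * ρ ^ (-(n:ℝ))) :=
            mul_le_mul' le_rfl hdec
        _ = ENNReal.ofReal ((bn n) ^ δ * 2 ^ d * (C₀ * ρ ^ (-(n:ℝ)))) := by
            rw [← ENNReal.ofReal_mul (by positivity)]
        _ ≤ ENNReal.ofReal (2 ^ d * 4 ^ γ * C₀ * dQ ^ (2*δ) * (2 ^ γ / ρ) ^ n) :=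
            ENNReal.ofReal_le_ofReal hscal
        _ = ENNReal.ofReal (2 ^ d * 4 ^ γ * C₀ * dQ ^ (2*δ)) *
              (ENNReal.ofReal (2 ^ γ / ρ)) ^ n := by
            rw [ENNReal.ofReal_mul (by positivity), ENNReal.ofReal_pow (by positivity)]
    -- sum of the large pieces
    have sumG : (∑' n, ∫⁻ x, G n x) ≤ ENNReal.ofReal (Alg * dQ ^ (2*δ)) := by
      have hq1 : (1:ℝ≥0∞) - ENNReal.ofReal (2 ^ γ / ρ) = ENNReal.ofReal ε := by
        rw [hεdef, ENNReal.ofReal_sub _ (by positivity), ENNReal.ofReal_one]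
      calc (∑' n, ∫⁻ x, G n x)
          ≤ ∑' n, ENNReal.ofReal (2 ^ d * 4 ^ γ * C₀ * dQ ^ (2*δ)) *
              (ENNReal.ofReal (2 ^ γ / ρ)) ^ n := ENNReal.tsum_le_tsum intG
        _ = ENNReal.ofReal (2 ^ d * 4 ^ γ * C₀ * dQ ^ (2*δ)) *
              ∑' n, (ENNReal.ofReal (2 ^ γ / ρ)) ^ n := ENNReal.tsum_mul_left
        _ = ENNReal.ofReal (2 ^ d * 4 ^ γ * C₀ * dQ ^ (2*δ)) *
              (1 - ENNReal.ofReal (2 ^ γ / ρ))⁻¹ := by rw [ENNReal.tsum_geometric]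
        _ = ENNReal.ofReal (2 ^ d * 4 ^ γ * C₀ * dQ ^ (2*δ)) * ENNReal.ofReal (ε⁻¹) := by
            rw [hq1, ← ENNReal.ofReal_inv_of_pos hε]
        _ = ENNReal.ofReal (Alg * dQ ^ (2*δ)) := by
            rw [← ENNReal.ofReal_mul (by positivity), hAlgdef]
            congr 1
            ring
    -- region is measurable
    have hSmeas : MeasurableSet (univ \ cuboidSt univ z r κ 2 : Set (Rd d)) := by
      apply MeasurableSet.diff MeasurableSet.univ
      have : (cuboidSt univ z r κ 2 : Set (Rd d))
          = ⋂ i, {x : Rd d | |x i - z i| ≤ κ ^ 2 * r i} := by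
        ext x
        simp [cuboidSt, cuboid, mem_iInter]
      rw [this]
      apply MeasurableSet.iInter
      intro i
      apply measurableSet_le
      · exact ((PiLp.continuous_apply 2 _ i).sub continuous_const).abs.measurable
      · exact measurable_const
    -- final assembly
    calc (∫⁻ x in univ \ cuboidSt univ z r κ 2,
            ⨆ (t : ℝ) (_ : 0 < t), ENNReal.ofReal (t ^ δ * T t x y))
        ≤ ∫⁻ x in univ \ cuboidSt univ z r κ 2, (SB x + ∑' n, G n x) :=
          setLIntegral_mono' hSmeas pointwise
      _ ≤ ∫⁻ x, (SB x + ∑' n, G n x) := setLIntegral_le_lintegral _ _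
      _ = (∫⁻ x, SB x) + ∫⁻ x, ∑' n, G n x := lintegral_add_left hSBmeas _
      _ = (∫⁻ x, SB x) + ∑' n, ∫⁻ x, G n x := by
          rw [lintegral_tsum (fun n => (hGmeas n).aemeasurable)]
      _ ≤ ENNReal.ofReal (Asm * dQ ^ (2*δ)) + ENNReal.ofReal (Alg * dQ ^ (2*δ)) :=
          add_le_add intSB sumG
      _ = ENNReal.ofReal (Asm * dQ ^ (2*δ) + Alg * dQ ^ (2*δ)) := by
          rw [ENNReal.ofReal_add (by positivity) (by positivity)]
      _ ≤ ENNReal.ofReal ((Asm + Alg + 1) * dQ ^ (2*δ)) := by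
          apply ENNReal.ofReal_le_ofReal
          have : (0:ℝ) ≤ dQ ^ (2*δ) := by positivity
          nlinarith
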